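/- (Bound on a zero-sum weighted row sum.) Let a_{i,1},...,a_{i,n} be real numbers and t_1,...,t_n complex numbers with Σ_{j=1}^n t_j = 0 and |t_j| ≤ 1 for all j. Set S = Σ_{j≠i} a_{i,j} t_j. Then |S| ≤ r_i, where r_i = min_{x∈ℝ} ( |x| + Σ_{j≠i} |a_{i,j} − x| ), which equals |t_i^{med}| + Σ_{j≠i}|a_{i,j} − t_i^{med}| for t_i^{med} a median of the numbers a_{i,1},...,a_{i,i−1}, 0, a_{i,i+1},...,a_{i,n}. -/

import Mathlib

theorem zero_sum_weighted_row_sum_bound (n : ℕ) (i : Fin n) (a : Fin n → ℝ)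
    (t : Fin n → ℂ) (hsum : ∑ j : Fin n, t j = 0)
    (hbd : ∀ j : Fin n, ‖t j‖ ≤ 1) :
    ∀ x : ℝ,
      ‖∑ j ∈ Finset.univ.erase i, (a j : ℂ) * t j‖ ≤
        |x| + ∑ j ∈ Finset.univ.erase i, |a j - x| := by
  intro x
  have hti : ∑ j ∈ Finset.univ.erase i, t j = -t i := by
    have := Finset.add_sum_erase Finset.univ t (Finset.mem_univ i)
    rw [hsum] at this
    linear_combination this
  have key : ∑ j ∈ Finset.univ.erase i, (a j : ℂ) * t j
      = (∑ j ∈ Finset.univ.erase i, ((a j : ℂ) - x) * t j) - x * t i := by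
    rw [show (∑ j ∈ Finset.univ.erase i, ((a j : ℂ) - x) * t j)
        = (∑ j ∈ Finset.univ.erase i, (a j : ℂ) * t j)
          - x * ∑ j ∈ Finset.univ.erase i, t j by
      rw [Finset.mul_sum, ← Finset.sum_sub_distrib]
      exact Finset.sum_congr rfl fun j _ => by ring]
    rw [hti]; ring
  rw [key]
  calc ‖(∑ j ∈ Finset.univ.erase i, ((a j : ℂ) - x) * t j) - x * t i‖
      ≤ ‖∑ j ∈ Finset.univ.erase i, ((a j : ℂ) - x) * t j‖
        + ‖(x : ℂ) * t i‖ := norm_sub_le _ _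
    _ ≤ (∑ j ∈ Finset.univ.erase i, |a j - x|) + |x| := by
        gcongr
        · calc ‖∑ j ∈ Finset.univ.erase i, ((a j : ℂ) - x) * t j‖
              ≤ ∑ j ∈ Finset.univ.erase i, ‖((a j : ℂ) - x) * t j‖ :=
                norm_sum_le _ _
            _ ≤ ∑ j ∈ Finset.univ.erase i, |a j - x| := by
                refine Finset.sum_le_sum fun j _ => ?_
                rw [norm_mul]
                calc ‖(a j : ℂ) - x‖ * ‖t j‖
                    ≤ ‖(a j : ℂ) - x‖ * 1 :=
                      mul_le_mul_of_nonneg_left (hbd j) (norm_nonneg _)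
                  _ = |a j - x| := by
                      rw [mul_one, ← Complex.ofReal_sub, Complex.norm_real, Real.norm_eq_abs]
        · calc ‖(x : ℂ) * t i‖
              ≤ ‖(x : ℂ)‖ * 1 := by
                rw [norm_mul]
                exact mul_le_mul_of_nonneg_left (hbd i) (norm_nonneg _)
            _ = |x| := by rw [mul_one, Complex.norm_real, Real.norm_eq_abs]
    _ = |x| + ∑ j ∈ Finset.univ.erase i, |a j - x| := add_comm _ _
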